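/- arXiv:1308.3630 — 7 statements merged into one kernel-verified Lean document; each statement's English description precedes it below -/
import Mathlib

section
/- Let m ≥ 2 be an integer and let α, β, λ ∈ ℂ. Then (|α + λβ|² + |β|²)^{1/2} ≤ ‖α·I_m + β·J_m(λ)‖ ≤ |α + λβ| + |β|. -/
noncomputable section

/-- The basic Jordan block `J_m(λ)`. -/
def jordanBlock (m : ℕ) (lam : ℂ) : Matrix (Fin m) (Fin m) ℂ :=
  Matrix.of fun i j => if (i : ℕ) = (j : ℕ) then lam else if (i : ℕ) + 1 = (j : ℕ) then 1 else 0

/-- The operator norm of a complex matrix, i.e. the norm of the induced operator on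
Euclidean space. -/
def opNorm {ι : Type*} [Fintype ι] [DecidableEq ι] (A : Matrix ι ι ℂ) : ℝ :=
  ‖Matrix.toEuclideanCLM (𝕜 := ℂ) A‖

lemma jordan_decomp (m : ℕ) (α β lam : ℂ) :
    α • (1 : Matrix (Fin m) (Fin m) ℂ) + β • jordanBlock m lam
      = (α + lam * β) • (1 : Matrix (Fin m) (Fin m) ℂ) + β • jordanBlock m 0 := by
  ext i j
  simp only [Matrix.add_apply, Matrix.smul_apply, Matrix.one_apply, jordanBlock, Matrix.of_apply,
    smul_eq_mul]
  by_cases h : i = j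
  · subst h
    simp
    ring
  · have h' : (i : ℕ) ≠ (j : ℕ) := fun hv => h (Fin.ext hv)
    simp [h, h']

lemma shift_mulVec (m : ℕ) (x : Fin m → ℂ) (i : Fin m) :
    (jordanBlock m 0).mulVec x i
      = if h : (i : ℕ) + 1 < m then x ⟨(i : ℕ) + 1, h⟩ else 0 := by
  unfold Matrix.mulVec dotProduct
  split_ifs with h
  · rw [Finset.sum_eq_single (⟨(i : ℕ) + 1, h⟩ : Fin m)]
    · simp [jordanBlock]
    · intro j _ hj
      have : ¬ ((i : ℕ) + 1 = (j : ℕ)) := by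
        intro hc
        exact hj (Fin.ext hc.symm)
      simp only [jordanBlock, Matrix.of_apply, this, if_false, ite_mul, zero_mul, one_mul]
      split <;> simp
    · simp
  · apply Finset.sum_eq_zero
    intro j _
    have h1 : ¬ ((i : ℕ) + 1 = (j : ℕ)) := by
      intro hc
      exact h (hc ▸ j.isLt)
    have h2 : ¬ ((i : ℕ) = (j : ℕ)) ∨ True := Or.inr trivial
    by_cases hij : (i : ℕ) = (j : ℕ)
    · simp [jordanBlock, hij]
    · simp [jordanBlock, hij, h1]

lemma shift_norm_le (m : ℕ) :
    ‖Matrix.toEuclideanCLM (𝕜 := ℂ) (jordanBlock m 0)‖ ≤ 1 := by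
  apply ContinuousLinearMap.opNorm_le_bound _ zero_le_one
  intro x
  rw [one_mul]
  have hx : ∀ i, (Matrix.toEuclideanCLM (𝕜 := ℂ) (jordanBlock m 0)) x i
      = (jordanBlock m 0).mulVec (fun j => x j) i := fun i => rfl
  rw [EuclideanSpace.norm_eq, EuclideanSpace.norm_eq]
  apply Real.sqrt_le_sqrt
  -- define y : ℕ → ℝ
  set y : ℕ → ℝ := fun n => if h : n < m then ‖x ⟨n, h⟩‖ ^ 2 else 0 with hy
  have key : ∀ i : Fin m, ‖(Matrix.toEuclideanCLM (𝕜 := ℂ) (jordanBlock m 0)) x i‖ ^ 2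
      = y ((i : ℕ) + 1) := by
    intro i
    rw [hx, shift_mulVec]
    by_cases h : (i : ℕ) + 1 < m
    · simp [hy, h]
    · simp [hy, h]
  calc ∑ i : Fin m, ‖(Matrix.toEuclideanCLM (𝕜 := ℂ) (jordanBlock m 0)) x i‖ ^ 2
      = ∑ i : Fin m, y ((i : ℕ) + 1) := Finset.sum_congr rfl fun i _ => key i
    _ = ∑ n ∈ Finset.range m, y (n + 1) := Fin.sum_univ_eq_sum_range (fun n => y (n + 1)) m
    _ ≤ ∑ n ∈ Finset.range (m + 1), y n := by
        rw [Finset.sum_range_succ' (fun n => y n) m]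
        have hy0 : 0 ≤ y 0 := by
          rw [hy]; dsimp only; split <;> positivity
        linarith
    _ = ∑ n ∈ Finset.range m, y n + y m := Finset.sum_range_succ y m
    _ = ∑ i : Fin m, ‖x i‖ ^ 2 := by
        rw [← Fin.sum_univ_eq_sum_range y m]
        have hym : y m = 0 := by simp [hy]
        rw [hym, add_zero]
        apply Finset.sum_congr rfl
        intro i _
        simp [hy, i.isLt]

set_option synthInstance.maxHeartbeats 1000000 in
set_option maxHeartbeats 1000000 in
/-- for `m ≥ 2` and `α, β, λ ∈ ℂ`,
`(|α + λβ|² + |β|²)^{1/2} ≤ ‖α·I_m + β·J_m(λ)‖ ≤ |α + λβ| + |β|`. -/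
theorem jordan_norm_estimate (m : ℕ) (hm : 2 ≤ m) (α β lam : ℂ) :
    Real.sqrt (‖α + lam * β‖ ^ 2 + ‖β‖ ^ 2)
        ≤ opNorm (α • (1 : Matrix (Fin m) (Fin m) ℂ) + β • jordanBlock m lam) ∧
      opNorm (α • (1 : Matrix (Fin m) (Fin m) ℂ) + β • jordanBlock m lam)
        ≤ ‖α + lam * β‖ + ‖β‖ := by
  set M : Matrix (Fin m) (Fin m) ℂ := α • 1 + β • jordanBlock m lam with hM
  set T := Matrix.toEuclideanCLM (𝕜 := ℂ) M with hT
  have h0 : (0 : ℕ) < m := by omega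
  have h1 : (1 : ℕ) < m := by omega
  set i0 : Fin m := ⟨0, h0⟩
  set i1 : Fin m := ⟨1, h1⟩
  constructor
  · -- lower bound
    set x : EuclideanSpace ℂ (Fin m) := EuclideanSpace.single i1 (1 : ℂ) with hxdef
    have hxnorm : ‖x‖ = 1 := by
      rw [hxdef, EuclideanSpace.norm_single]
      simp
    have happ : ∀ i, T x i = M i i1 := by
      intro i
      have : T x i = M.mulVec (fun j => x j) i := rfl
      rw [this]
      have hxfun : (fun j => x j) = Pi.single i1 (1 : ℂ) := by
        funext j
        simp [hxdef, EuclideanSpace.single_apply, Pi.single_apply, eq_comm]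
      rw [hxfun, Matrix.mulVec_single]
      simp
    have hval : ∀ i : Fin m, ‖T x i‖ ^ 2
        = if i = i1 then ‖α + lam * β‖ ^ 2
          else if i = i0 then ‖β‖ ^ 2 else 0 := by
      intro i
      rw [happ]
      by_cases hi : i = i1
      · subst hi
        simp [hM, jordanBlock, Matrix.one_apply, i1]
        ring_nf
      · by_cases hi' : i = i0
        · subst hi'
          have : (i0 : ℕ) ≠ (i1 : ℕ) := by simp [i0, i1]
          simp [hM, jordanBlock, Matrix.one_apply, hi, i0, i1,
            Fin.ne_of_val_ne]
        · have hv1 : (i : ℕ) ≠ (i1 : ℕ) := fun hc => hi (Fin.ext hc)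
          have hv0 : (i : ℕ) + 1 ≠ (i1 : ℕ) := by
            intro hc
            apply hi'
            apply Fin.ext
            simp [i0, i1] at hc ⊢
            omega
          simp [hM, jordanBlock, Matrix.one_apply, hi, hi', hv1, hv0]
    have hnorm : ‖T x‖ = Real.sqrt (‖α + lam * β‖ ^ 2 + ‖β‖ ^ 2) := by
      rw [EuclideanSpace.norm_eq]
      congr 1
      rw [Finset.sum_congr rfl fun i _ => hval i]
      have h10 : i1 ≠ i0 := by
        apply Fin.ne_of_val_ne
        simp [i0, i1]
      have hsplit : ∀ i : Fin m,
          (if i = i1 then ‖α + lam * β‖ ^ 2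
            else if i = i0 then ‖β‖ ^ 2 else 0)
          = (if i = i1 then ‖α + lam * β‖ ^ 2 else 0)
            + (if i = i0 then ‖β‖ ^ 2 else 0) := by
        intro i
        by_cases h : i = i1
        · subst h
          simp [h10]
        · simp [h]
      rw [Finset.sum_congr rfl fun i _ => hsplit i, Finset.sum_add_distrib,
        Finset.sum_ite_eq' Finset.univ i1, Finset.sum_ite_eq' Finset.univ i0]
      simp
    calc Real.sqrt (‖α + lam * β‖ ^ 2 + ‖β‖ ^ 2)
        = ‖T x‖ := hnorm.symm
      _ ≤ ‖T‖ * ‖x‖ := T.le_opNorm x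
      _ = opNorm M := by
          rw [hxnorm, mul_one, hT]
          rfl
  · -- upper bound
    have hdec := jordan_decomp m α β lam
    rw [show opNorm M = ‖T‖ from rfl, hT, hM, hdec]
    rw [map_add, map_smul, map_smul, map_one]
    calc ‖(α + lam * β) • (1 : EuclideanSpace ℂ (Fin m) →L[ℂ] EuclideanSpace ℂ (Fin m))
          + β • Matrix.toEuclideanCLM (𝕜 := ℂ) (jordanBlock m 0)‖
        ≤ ‖(α + lam * β) • (1 : EuclideanSpace ℂ (Fin m) →L[ℂ] EuclideanSpace ℂ (Fin m))‖
          + ‖β • Matrix.toEuclideanCLM (𝕜 := ℂ) (jordanBlock m 0)‖ := norm_add_le _ _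
      _ ≤ ‖α + lam * β‖ + ‖β‖ := by
          apply add_le_add
          · calc ‖(α + lam * β) • (1 : EuclideanSpace ℂ (Fin m) →L[ℂ] EuclideanSpace ℂ (Fin m))‖
                ≤ ‖α + lam * β‖ * ‖(1 : EuclideanSpace ℂ (Fin m) →L[ℂ] EuclideanSpace ℂ (Fin m))‖ :=
                  ContinuousLinearMap.opNorm_smul_le _ _
              _ ≤ ‖α + lam * β‖ * 1 := by
                  gcongr
                  exact ContinuousLinearMap.norm_id_le
              _ = ‖α + lam * β‖ := by rw [mul_one]
          · calc ‖β • Matrix.toEuclideanCLM (𝕜 := ℂ) (jordanBlock m 0)‖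
                ≤ ‖β‖ * ‖Matrix.toEuclideanCLM (𝕜 := ℂ) (jordanBlock m 0)‖ :=
                  ContinuousLinearMap.opNorm_smul_le _ _
              _ ≤ ‖β‖ * 1 := by gcongr; exact shift_norm_le m
              _ = ‖β‖ := by rw [mul_one]

end
end

section
/- Let α ∈ ℝ and β ∈ ℂ. Then the matrix α·I_k + β·J_k(0) + conj(β)·J_k(0)* is positive semidefinite for every positive integer k if and only if α ≥ 0 and |β| ≤ α/2. -/
open Matrix
open scoped ComplexOrder

noncomputable section

open Finset in
lemma aux_double_sum (k : ℕ) (f g : ℕ → ℂ) :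
    ∑ i ∈ range k, ∑ j ∈ range k, (if i + 1 = j then f i * g j else 0)
      = ∑ i ∈ range (k-1), f i * g (i+1) := by
  have h1 : ∀ i ∈ range k, ∑ j ∈ range k, (if i + 1 = j then f i * g j else 0)
      = if i + 1 ∈ range k then f i * g (i+1) else 0 := fun i _ =>
    Finset.sum_ite_eq (range k) (i+1) (fun j => f i * g j)
  rw [Finset.sum_congr rfl h1]
  rw [← Finset.sum_subset (Finset.range_subset_range.mpr (Nat.sub_le k 1))]
  · refine Finset.sum_congr rfl fun i hi => ?_
    rw [if_pos]; simp only [mem_range] at hi ⊢; omega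
  · intro i hi hni
    rw [if_neg]; simp only [mem_range] at hi hni ⊢; omega

lemma smul_posSemidef {k : ℕ} {A : Matrix (Fin k) (Fin k) ℂ} (hA : A.PosSemidef)
    {c : ℝ} (hc : 0 ≤ c) : ((c:ℂ) • A).PosSemidef := by
  refine posSemidef_iff_dotProduct_mulVec.mpr ⟨?_, ?_⟩
  · unfold Matrix.IsHermitian
    rw [conjTranspose_smul, hA.1.eq]
    simp
  · intro x
    rw [smul_mulVec, dotProduct_smul, smul_eq_mul]
    exact mul_nonneg (by exact_mod_cast hc) (hA.dotProduct_mulVec_nonneg x)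

open Finset in
lemma dot_one (k : ℕ) (z : ℂ) (hz : star z * z = 1) :
    dotProduct (star fun i : Fin k => z ^ (i:ℕ)) ((1 : Matrix (Fin k) (Fin k) ℂ) *ᵥ fun i => z ^ (i:ℕ)) = (k:ℂ) := by
  rw [one_mulVec]
  simp only [dotProduct, Pi.star_apply]
  have h : ∀ i : Fin k, star (z ^ (i:ℕ)) * z ^ (i:ℕ) = 1 := by
    intro i; rw [star_pow, ← mul_pow, hz, one_pow]
  rw [Finset.sum_congr rfl (fun i _ => h i)]
  simp

open Finset in
lemma dot_S (k : ℕ) (z : ℂ) (hz : star z * z = 1) :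
    dotProduct (star fun i : Fin k => z ^ (i:ℕ)) (jordanBlock k 0 *ᵥ fun i => z ^ (i:ℕ))
      = ((k-1:ℕ):ℂ) * z := by
  simp only [dotProduct, mulVec, jordanBlock, of_apply, Pi.star_apply, dotProduct]
  have hmerge : ∀ i j : Fin k,
      star (z ^ (i:ℕ)) * ((if (i:ℕ) = (j:ℕ) then (0:ℂ) else if (i:ℕ)+1 = (j:ℕ) then 1 else 0) * z ^ (j:ℕ))
      = if (i:ℕ)+1 = (j:ℕ) then star (z ^ (i:ℕ)) * z ^ (j:ℕ) else 0 := by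
    intro i j
    split_ifs with h1 h2 h2 <;> first | omega | ring
  simp only [Finset.mul_sum, hmerge]
  rw [Fin.sum_univ_eq_sum_range (fun i => ∑ j : Fin k, if i + 1 = (j:ℕ) then star (z ^ i) * z ^ (j:ℕ) else 0)]
  have hinner : ∀ i : ℕ, (∑ j : Fin k, if i + 1 = (j:ℕ) then star (z ^ i) * z ^ (j:ℕ) else 0)
      = ∑ j ∈ range k, if i + 1 = j then star (z ^ i) * z ^ j else 0 := fun i =>
    Fin.sum_univ_eq_sum_range (fun j => if i + 1 = j then star (z ^ i) * z ^ j else 0) k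
  rw [Finset.sum_congr rfl fun i _ => hinner i]
  rw [aux_double_sum k (fun i => star (z ^ i)) (fun j => z ^ j)]
  have hterm : ∀ i : ℕ, star (z ^ i) * z ^ (i+1) = z := by
    intro i
    rw [pow_succ, ← mul_assoc, star_pow, ← mul_pow, hz, one_pow, one_mul]
  rw [Finset.sum_congr rfl fun i _ => hterm i, Finset.sum_const, card_range, nsmul_eq_mul]

open Finset in
lemma dot_SH (k : ℕ) (z : ℂ) (hz : star z * z = 1) :
    dotProduct (star fun i : Fin k => z ^ (i:ℕ)) ((jordanBlock k 0)ᴴ *ᵥ fun i => z ^ (i:ℕ))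
      = ((k-1:ℕ):ℂ) * star z := by
  simp only [dotProduct, mulVec, jordanBlock, conjTranspose_apply, of_apply, Pi.star_apply,
    dotProduct]
  have hmerge : ∀ i j : Fin k,
      star (z ^ (i:ℕ)) * (star (if (j:ℕ) = (i:ℕ) then (0:ℂ) else if (j:ℕ)+1 = (i:ℕ) then 1 else 0) * z ^ (j:ℕ))
      = if (j:ℕ)+1 = (i:ℕ) then z ^ (j:ℕ) * star (z ^ (i:ℕ)) else 0 := by
    intro i j
    split_ifs with h1 h2 h2 <;> simp <;> first | omega | ring
  simp only [Finset.mul_sum, hmerge]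
  rw [Finset.sum_comm]
  rw [Fin.sum_univ_eq_sum_range (fun j => ∑ i : Fin k, if j + 1 = (i:ℕ) then z ^ j * star (z ^ (i:ℕ)) else 0)]
  have hinner : ∀ j : ℕ, (∑ i : Fin k, if j + 1 = (i:ℕ) then z ^ j * star (z ^ (i:ℕ)) else 0)
      = ∑ i ∈ range k, if j + 1 = i then z ^ j * star (z ^ i) else 0 := fun j =>
    Fin.sum_univ_eq_sum_range (fun i => if j + 1 = i then z ^ j * star (z ^ i) else 0) k
  rw [Finset.sum_congr rfl fun j _ => hinner j]
  rw [aux_double_sum k (fun j => z ^ j) (fun i => star (z ^ i))]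
  have hterm : ∀ j : ℕ, z ^ j * star (z ^ (j+1)) = star z := by
    intro j
    rw [star_pow, pow_succ, ← mul_assoc, ← mul_pow]
    rw [mul_comm z (star z), hz, one_pow, one_mul]
  rw [Finset.sum_congr rfl fun j _ => hterm j, Finset.sum_const, card_range, nsmul_eq_mul]

open Finset in
lemma jordan_mul_conjTranspose (k : ℕ) :
    jordanBlock k 0 * (jordanBlock k 0)ᴴ
      = diagonal (fun i : Fin k => if (i:ℕ)+1 < k then (1:ℂ) else 0) := by
  ext i j
  rw [mul_apply]
  have hterm : ∀ l : Fin k, jordanBlock k 0 i l * star (jordanBlock k 0 j l)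
      = if (i:ℕ)+1 = (l:ℕ) ∧ (j:ℕ)+1 = (l:ℕ) then 1 else 0 := by
    intro l
    simp only [jordanBlock, of_apply]
    split_ifs <;> simp_all <;> omega
  simp only [conjTranspose_apply, hterm]
  by_cases hij : (i:ℕ) = (j:ℕ)
  · have : i = j := Fin.ext hij
    subst this
    rw [diagonal_apply_eq]
    have : ∀ l : Fin k, (if (i:ℕ)+1 = (l:ℕ) ∧ (i:ℕ)+1 = (l:ℕ) then (1:ℂ) else 0)
        = if (i:ℕ)+1 = (l:ℕ) then 1 else 0 := by intro l; simp [and_self]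
    rw [Finset.sum_congr rfl fun l _ => this l]
    rw [Fin.sum_univ_eq_sum_range (fun l => if (i:ℕ)+1 = l then (1:ℂ) else 0)]
    rw [Finset.sum_ite_eq (range k) ((i:ℕ)+1) (fun _ => (1:ℂ))]
    simp [mem_range]
  · rw [diagonal_apply_ne _ (fun h => hij (congrArg Fin.val h))]
    refine Finset.sum_eq_zero fun l _ => ?_
    rw [if_neg]
    rintro ⟨h1, h2⟩
    omega

lemma diag_complement (k : ℕ) :
    diagonal (fun i : Fin k => if (i:ℕ)+1 < k then (1:ℂ) else 0)
      + diagonal (fun i : Fin k => if (i:ℕ)+1 < k then (0:ℂ) else 1) = 1 := by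
  rw [diagonal_add, ← diagonal_one]
  refine congrArg diagonal ?_
  funext i
  split_ifs <;> ring

/-- for `α ∈ ℝ` and `β ∈ ℂ`, the matrix
`α·I_k + β·J_k(0) + conj(β)·J_k(0)*` is positive semidefinite for every positive integer `k`
if and only if `α ≥ 0` and `|β| ≤ α/2`. -/
theorem jordan_shift_posSemidef_iff (α : ℝ) (β : ℂ) :
    (∀ k : ℕ, 0 < k →
        ((α : ℂ) • (1 : Matrix (Fin k) (Fin k) ℂ) + β • jordanBlock k 0
          + (starRingEnd ℂ) β • (jordanBlock k 0)ᴴ).PosSemidef) ↔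
      0 ≤ α ∧ ‖β‖ ≤ α / 2 := by
  constructor
  · intro H
    -- choose unit z with β * z = -|β|
    set b : ℝ := ‖β‖ with hb
    set z : ℂ := if β = 0 then 1 else -(starRingEnd ℂ) β / (b:ℂ) with hzdef
    have hb0 : 0 ≤ b := norm_nonneg β
    have hz : star z * z = 1 := by
      by_cases h : β = 0
      · simp [hzdef, h]
      · have hbne : (b:ℂ) ≠ 0 := by
          simp only [hb, Ne, Complex.ofReal_eq_zero]
          exact fun hc => h (norm_eq_zero.mp hc)
        rw [mul_comm]
        rw [show z = -(starRingEnd ℂ) β / (b:ℂ) from by rw [hzdef, if_neg h]]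
        rw [Complex.star_def, Complex.mul_conj]
        rw [Complex.normSq_div, Complex.normSq_neg]
        rw [Complex.normSq_conj]
        have h1 : Complex.normSq β = b^2 := by rw [hb, Complex.sq_norm]
        have h2 : Complex.normSq (b:ℂ) = b^2 := by
          rw [Complex.normSq_ofReal]; ring
        have hbr : b ≠ 0 := fun hc => h (norm_eq_zero.mp hc)
        rw [h1, h2, div_self (pow_ne_zero 2 hbr), Complex.ofReal_one]
    have hβz : β * z = -((b:ℝ):ℂ) := by
      by_cases h : β = 0
      · simp [hzdef, h, hb]
      · have hbne : (b:ℂ) ≠ 0 := by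
          simp only [hb, Ne, Complex.ofReal_eq_zero]
          exact fun hc => h (norm_eq_zero.mp hc)
        rw [show z = -(starRingEnd ℂ) β / (b:ℂ) from by rw [hzdef, if_neg h]]
        rw [mul_div_assoc']
        rw [mul_neg, Complex.mul_conj]
        have h1 : (Complex.normSq β : ℂ) = ((b:ℂ))^2 := by
          rw [hb]
          norm_cast
          rw [Complex.sq_norm]
        rw [h1]
        field_simp
    have key : ∀ k : ℕ, 0 < k → 0 ≤ α * k - 2 * ((k-1:ℕ):ℝ) * b := by
      intro k hk
      have h := (H k hk).dotProduct_mulVec_nonneg (fun i => z ^ (i:ℕ))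
      rw [add_mulVec, add_mulVec, smul_mulVec, smul_mulVec, smul_mulVec,
        dotProduct_add, dotProduct_add, dotProduct_smul, dotProduct_smul, dotProduct_smul,
        smul_eq_mul, smul_eq_mul, smul_eq_mul, dot_one k z hz, dot_S k z hz, dot_SH k z hz] at h
      have hstar : (starRingEnd ℂ) β * (((k-1:ℕ):ℂ) * star z) = -((b:ℝ):ℂ) * ((k-1:ℕ):ℂ) := by
        have : (starRingEnd ℂ) β * star z = star (β * z) := (star_mul' β z).symm
        calc (starRingEnd ℂ) β * (((k-1:ℕ):ℂ) * star z)
            = ((k-1:ℕ):ℂ) * ((starRingEnd ℂ) β * star z) := by ring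
          _ = ((k-1:ℕ):ℂ) * star (β * z) := by rw [this]
          _ = ((k-1:ℕ):ℂ) * star (-((b:ℝ):ℂ)) := by rw [hβz]
          _ = -((b:ℝ):ℂ) * ((k-1:ℕ):ℂ) := by
              rw [star_neg]
              rw [show star ((b:ℝ):ℂ) = ((b:ℝ):ℂ) from Complex.conj_ofReal b]
              ring
      have hβterm : β * (((k-1:ℕ):ℂ) * z) = -((b:ℝ):ℂ) * ((k-1:ℕ):ℂ) := by
        calc β * (((k-1:ℕ):ℂ) * z) = ((k-1:ℕ):ℂ) * (β * z) := by ring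
          _ = -((b:ℝ):ℂ) * ((k-1:ℕ):ℂ) := by rw [hβz]; ring
      rw [hβterm, hstar] at h
      have hcast : (α:ℂ) * (k:ℂ) + -((b:ℝ):ℂ) * ((k-1:ℕ):ℂ) + -((b:ℝ):ℂ) * ((k-1:ℕ):ℂ)
          = ((α * k - 2 * ((k-1:ℕ):ℝ) * b : ℝ) : ℂ) := by
        push_cast
        ring
      rw [hcast] at h
      exact Complex.zero_le_real.mp h
    have hα : 0 ≤ α := by
      have h1 := key 1 one_pos
      simpa using h1
    refine ⟨hα, ?_⟩
    by_contra hcon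
    push_neg at hcon
    have hpos : 0 < 2 * b - α := by rw [hb]; linarith
    obtain ⟨n, hn⟩ := exists_nat_gt ((2 * b) / (2 * b - α))
    have hn' : 2 * b < (n:ℝ) * (2 * b - α) := by
      rw [div_lt_iff₀ hpos] at hn
      linarith
    have hkey := key (n+1) (Nat.succ_pos n)
    have hc : ((n+1-1:ℕ):ℝ) = (n:ℝ) := by simp
    rw [hc] at hkey
    push_cast at hkey
    nlinarith
  · rintro ⟨hα, hβ⟩ k hk
    set b : ℝ := ‖β‖ with hb
    have hb0 : 0 ≤ b := norm_nonneg β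
    set S := jordanBlock k 0 with hS
    set ω : ℂ := if β = 0 then 1 else β / (b:ℂ) with hωdef
    have hbω : ((b:ℝ):ℂ) * ω = β := by
      by_cases h : β = 0
      · simp [hωdef, h, hb]
      · have hbne : ((b:ℝ):ℂ) ≠ 0 := by
          simp only [hb, Ne, Complex.ofReal_eq_zero]
          exact fun hc => h (norm_eq_zero.mp hc)
        rw [hωdef, if_neg h, mul_div_cancel₀ _ hbne]
    have hbω' : ((b:ℝ):ℂ) * star ω = (starRingEnd ℂ) β := by
      have h2 : (starRingEnd ℂ) β = star (((b:ℝ):ℂ) * ω) := by rw [hbω]; rfl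
      rw [h2, star_mul']
      congr 1
      exact (Complex.conj_ofReal b).symm
    have hωω : ω * star ω = 1 := by
      by_cases h : β = 0
      · simp [hωdef, h]
      · have hbne : ((b:ℝ):ℂ) ≠ 0 := by
          simp only [hb, Ne, Complex.ofReal_eq_zero]
          exact fun hc => h (norm_eq_zero.mp hc)
        rw [hωdef, if_neg h, Complex.star_def, Complex.mul_conj, Complex.normSq_div]
        have h1 : Complex.normSq β = b^2 := by rw [hb, Complex.sq_norm]
        have h2 : Complex.normSq ((b:ℝ):ℂ) = b^2 := by rw [Complex.normSq_ofReal]; ring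
        rw [h1, h2]
        have hbr : b ≠ 0 := fun hc => h (norm_eq_zero.mp hc)
        rw [div_self (pow_ne_zero 2 hbr)]
        norm_num
    have hexp : (1 + ω • S) * (1 + ω • S)ᴴ
        = 1 + ω • S + star ω • Sᴴ + (ω * star ω) • (S * Sᴴ) := by
      rw [conjTranspose_add, conjTranspose_smul, conjTranspose_one]
      rw [add_mul, mul_add, mul_add, Matrix.one_mul, Matrix.one_mul, Matrix.mul_one]
      rw [Matrix.smul_mul, Matrix.mul_smul, smul_smul]
      abel
    have hkey : (α : ℂ) • (1 : Matrix (Fin k) (Fin k) ℂ) + β • S + (starRingEnd ℂ) β • Sᴴ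
        = ((α - 2*b : ℝ):ℂ) • (1 : Matrix (Fin k) (Fin k) ℂ)
          + ((b:ℝ):ℂ) • ((1 + ω • S) * (1 + ω • S)ᴴ)
          + ((b:ℝ):ℂ) • diagonal (fun i : Fin k => if (i:ℕ)+1 < k then (0:ℂ) else 1) := by
      rw [hexp, hωω, one_smul, jordan_mul_conjTranspose k]
      rw [smul_add, smul_add, smul_add, smul_smul, smul_smul, hbω, hbω']
      have hdiag : ((b:ℝ):ℂ) • diagonal (fun i : Fin k => if (i:ℕ)+1 < k then (1:ℂ) else 0)
          + ((b:ℝ):ℂ) • diagonal (fun i : Fin k => if (i:ℕ)+1 < k then (0:ℂ) else 1)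
          = ((b:ℝ):ℂ) • (1 : Matrix (Fin k) (Fin k) ℂ) := by
        rw [← smul_add, diag_complement k]
      have hscal : ((α - 2*b : ℝ):ℂ) • (1 : Matrix (Fin k) (Fin k) ℂ)
          + ((b:ℝ):ℂ) • (1 : Matrix (Fin k) (Fin k) ℂ)
          + ((b:ℝ):ℂ) • (1 : Matrix (Fin k) (Fin k) ℂ)
          = (α : ℂ) • (1 : Matrix (Fin k) (Fin k) ℂ) := by
        rw [← add_smul, ← add_smul]
        congr 1
        push_cast
        ring
      calc (α : ℂ) • (1 : Matrix (Fin k) (Fin k) ℂ) + β • S + (starRingEnd ℂ) β • Sᴴ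
          = ((α - 2*b : ℝ):ℂ) • 1 + ((b:ℝ):ℂ) • 1 + ((b:ℝ):ℂ) • 1 + β • S + (starRingEnd ℂ) β • Sᴴ := by
            rw [hscal]
        _ = _ := by
            rw [← hdiag]
            abel
    rw [hkey]
    refine PosSemidef.add (PosSemidef.add ?_ ?_) ?_
    · exact smul_posSemidef Matrix.PosSemidef.one (by linarith)
    · exact smul_posSemidef (posSemidef_self_mul_conjTranspose _) hb0
    · refine smul_posSemidef (PosSemidef.diagonal ?_) hb0
      intro i
      by_cases h : (i:ℕ)+1 < k <;> simp [h] <;> exact zero_le_one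

end
end

section
/- For every positive integer m, every λ ∈ ℂ, and every unit vector ξ ∈ ℂ^m, one has |⟨J_m(λ)ξ, ξ⟩ − λ| ≤ cos(π/(m+1)). In other words, the numerical range of J_m(λ) is contained in the closed disc of radius cos(π/(m+1)) centred at λ. -/
open Matrix

noncomputable section

/-- Weighted AM-GM inequality. -/
lemma jordan_aux_amgm (a b x y : ℝ) (hx : 0 < x) (hy : 0 < y) :
    a * b ≤ y / (2 * x) * a ^ 2 + x / (2 * y) * b ^ 2 := by
  have key : y / (2 * x) * a ^ 2 + x / (2 * y) * b ^ 2 - a * b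
      = (y * a - x * b) ^ 2 / (2 * x * y) := by
    field_simp
    ring
  nlinarith [div_nonneg (sq_nonneg (y * a - x * b)) (by positivity : (0:ℝ) ≤ 2 * x * y)]

/-- The key real inequality: `∑ b_k b_{k+1} ≤ cos(π/(m+1)) ∑ b_k²`. -/
lemma jordan_aux_key (m : ℕ) (hm : 0 < m) (b : ℕ → ℝ) :
    ∑ k ∈ Finset.range (m - 1), b k * b (k + 1)
      ≤ Real.cos (Real.pi / (m + 1)) * ∑ k ∈ Finset.range m, b k ^ 2 := by
  obtain ⟨n, rfl⟩ : ∃ n, m = n + 1 := ⟨m - 1, by omega⟩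
  simp only [Nat.add_sub_cancel]
  set θ := Real.pi / ((n:ℝ) + 1 + 1) with hθ
  have hθpos : 0 < θ := by positivity
  set w : ℕ → ℝ := fun k => Real.sin (k * θ) with hw
  have hsin : ∀ k : ℕ, 1 ≤ k → k ≤ n + 1 → 0 < w k := by
    intro k h1 h2
    apply Real.sin_pos_of_pos_of_lt_pi
    · have : (0:ℝ) < k := by exact_mod_cast h1
      positivity
    · have hk : (k:ℝ) < (n:ℝ) + 1 + 1 := by
        have : k < n + 2 := by omega
        exact_mod_cast this
      calc (k:ℝ) * θ < ((n:ℝ) + 1 + 1) * θ := mul_lt_mul_of_pos_right hk hθpos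
        _ = Real.pi := by rw [hθ]; field_simp
  have hw0 : w 0 = 0 := by simp [hw]
  have hwm1 : w (n + 2) = 0 := by
    have h : ((n:ℝ) + 1 + 1) * θ = Real.pi := by rw [hθ]; field_simp
    simp only [hw]
    push_cast
    rw [show ((n:ℝ) + 2) * θ = ((n:ℝ) + 1 + 1) * θ by ring, h, Real.sin_pi]
  have hrec : ∀ k : ℕ, w (k + 2) + w k = 2 * Real.cos θ * w (k + 1) := by
    intro k
    simp only [hw]
    push_cast
    rw [show ((k:ℝ) + 2) * θ = ((k:ℝ) + 1) * θ + θ by ring,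
        show (k:ℝ) * θ = ((k:ℝ) + 1) * θ - θ by ring, Real.sin_add, Real.sin_sub]
    ring
  set u : ℕ → ℝ := fun k => w (k + 2) / (2 * w (k + 1)) with hu
  set v : ℕ → ℝ := fun k => w k / (2 * w (k + 1)) with hv
  have huv : ∀ k ∈ Finset.range (n + 1), u k + v k = Real.cos θ := by
    intro k hk
    rw [Finset.mem_range] at hk
    have hw1 : 0 < w (k + 1) := hsin _ (by omega) (by omega)
    simp only [hu, hv]
    rw [← add_div, hrec k]
    field_simp
  have step1 : ∑ k ∈ Finset.range n, b k * b (k + 1)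
      ≤ ∑ k ∈ Finset.range n, (u k * b k ^ 2 + v (k + 1) * b (k + 1) ^ 2) := by
    apply Finset.sum_le_sum
    intro k hk
    rw [Finset.mem_range] at hk
    have hx : 0 < w (k + 1) := hsin _ (by omega) (by omega)
    have hy : 0 < w (k + 2) := hsin _ (by omega) (by omega)
    simp only [hu, hv]
    exact jordan_aux_amgm _ _ _ _ hx hy
  have hulast : u n = 0 := by simp [hu, hwm1]
  have hv0 : v 0 = 0 := by simp [hv, hw0]
  have e1 : ∑ k ∈ Finset.range n, u k * b k ^ 2
      = ∑ k ∈ Finset.range (n + 1), u k * b k ^ 2 := by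
    rw [Finset.sum_range_succ, hulast]
    ring
  have e2 : ∑ k ∈ Finset.range n, v (k + 1) * b (k + 1) ^ 2
      = ∑ k ∈ Finset.range (n + 1), v k * b k ^ 2 := by
    rw [Finset.sum_range_succ', hv0]
    ring
  have step2 : ∑ k ∈ Finset.range n, (u k * b k ^ 2 + v (k + 1) * b (k + 1) ^ 2)
      = Real.cos θ * ∑ k ∈ Finset.range (n + 1), b k ^ 2 := by
    rw [Finset.sum_add_distrib, e1, e2, Finset.mul_sum, ← Finset.sum_add_distrib]
    apply Finset.sum_congr rfl
    intro k hk
    rw [← huv k hk]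
    ring
  calc ∑ k ∈ Finset.range n, b k * b (k + 1)
      ≤ ∑ k ∈ Finset.range n, (u k * b k ^ 2 + v (k + 1) * b (k + 1) ^ 2) := step1
    _ = Real.cos θ * ∑ k ∈ Finset.range (n + 1), b k ^ 2 := step2
    _ = Real.cos (Real.pi / (((n:ℕ) + 1 : ℕ) + 1 : ℝ)) * ∑ k ∈ Finset.range (n + 1), b k ^ 2 := by
        have h : (((n:ℕ) + 1 : ℕ) : ℝ) + 1 = (n:ℝ) + 1 + 1 := by push_cast; ring
        rw [h, ← hθ]

/-- for every positive integer `m`, every `λ ∈ ℂ` and every unit vector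
`ξ ∈ ℂ^m`, one has `|⟨J_m(λ)ξ, ξ⟩ − λ| ≤ cos(π/(m+1))`. -/
theorem jordan_numericalRange_subset_disc (m : ℕ) (hm : 0 < m) (lam : ℂ)
    (ξ : Fin m → ℂ) (hξ : ∑ i, ‖ξ i‖ ^ 2 = 1) :
    ‖(star ξ) ⬝ᵥ ((jordanBlock m lam).mulVec ξ) - lam‖
      ≤ Real.cos (Real.pi / (m + 1)) := by
  classical
  have hmul : ∀ i : Fin m, (jordanBlock m lam).mulVec ξ i
      = lam * ξ i + (if h : (i:ℕ) + 1 < m then ξ ⟨(i:ℕ) + 1, h⟩ else 0) := by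
    intro i
    by_cases h : (i:ℕ) + 1 < m
    · have hsum : ∀ j : Fin m, jordanBlock m lam i j
          = (if i = j then lam else 0) + (if (⟨(i:ℕ)+1, h⟩ : Fin m) = j then 1 else 0) := by
        intro j
        simp only [jordanBlock, Matrix.of_apply, Fin.ext_iff]
        by_cases h1 : (i:ℕ) = (j:ℕ)
        · have h2 : ¬((i:ℕ) + 1 = (j:ℕ)) := by omega
          simp [h1, h2]
        · by_cases h2 : (i:ℕ) + 1 = (j:ℕ) <;> simp [h1, h2]
      rw [dif_pos h, mulVec, dotProduct]
      rw [Finset.sum_congr rfl (fun j _ => by rw [hsum j, add_mul])]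
      rw [Finset.sum_add_distrib]
      simp [Finset.sum_ite_eq, ite_mul, zero_mul]
    · have hsum : ∀ j : Fin m, jordanBlock m lam i j = (if i = j then lam else 0) := by
        intro j
        simp only [jordanBlock, Matrix.of_apply, Fin.ext_iff]
        have h2 : ¬((i:ℕ) + 1 = (j:ℕ)) := by omega
        by_cases h1 : (i:ℕ) = (j:ℕ) <;> simp [h1, h2]
      rw [dif_neg h, mulVec, dotProduct]
      rw [Finset.sum_congr rfl (fun j _ => by rw [hsum j])]
      simp [Finset.sum_ite_eq, ite_mul, zero_mul]
  have hdot : (star ξ) ⬝ᵥ ((jordanBlock m lam).mulVec ξ) - lam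
      = ∑ i : Fin m, star (ξ i) * (if h : (i:ℕ) + 1 < m then ξ ⟨(i:ℕ) + 1, h⟩ else 0) := by
    rw [dotProduct]
    rw [Finset.sum_congr rfl (fun i _ => by rw [Pi.star_apply, hmul i, mul_add])]
    rw [Finset.sum_add_distrib]
    have h1 : ∑ i : Fin m, star (ξ i) * (lam * ξ i) = lam := by
      have heach : ∀ i : Fin m, star (ξ i) * (lam * ξ i) = lam * ((‖ξ i‖ : ℂ) ^ 2) := by
        intro i
        rw [show star (ξ i) * (lam * ξ i) = lam * ((starRingEnd ℂ) (ξ i) * ξ i) by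
          simp [RCLike.star_def]; ring]
        rw [RCLike.conj_mul]
        norm_cast
      rw [Finset.sum_congr rfl (fun i _ => heach i), ← Finset.mul_sum]
      have hsum1 : ∑ i : Fin m, ((‖ξ i‖ : ℂ) ^ 2) = 1 := by
        exact_mod_cast congrArg (Complex.ofReal) hξ
      rw [hsum1, mul_one]
    rw [h1]
    ring
  set b : ℕ → ℝ := fun k => if h : k < m then ‖ξ ⟨k, h⟩‖ else 0 with hb
  have hbfin : ∀ i : Fin m, b (i : ℕ) = ‖ξ i‖ := by
    intro i
    simp [hb, i.isLt]
  have habs : ‖(star ξ) ⬝ᵥ ((jordanBlock m lam).mulVec ξ) - lam‖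
      ≤ ∑ i : Fin m, b (i : ℕ) * b ((i : ℕ) + 1) := by
    rw [hdot]
    refine le_trans (norm_sum_le _ _) (le_of_eq ?_)
    apply Finset.sum_congr rfl
    intro i _
    rw [norm_mul]
    have hstar : ‖star (ξ i)‖ = b (i : ℕ) := by
      rw [hbfin i, norm_star]
    have hdite : ‖(if h : (i:ℕ) + 1 < m then ξ ⟨(i:ℕ) + 1, h⟩ else 0)‖
        = b ((i : ℕ) + 1) := by
      by_cases h : (i:ℕ) + 1 < m <;> simp [h, hb]
    rw [hstar, hdite]
  have hsum2 : ∑ i : Fin m, b (i : ℕ) * b ((i : ℕ) + 1)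
      = ∑ k ∈ Finset.range (m - 1), b k * b (k + 1) := by
    rw [Fin.sum_univ_eq_sum_range (fun k => b k * b (k + 1)) m]
    obtain ⟨n, rfl⟩ : ∃ n, m = n + 1 := ⟨m - 1, by omega⟩
    rw [Finset.sum_range_succ]
    have : b (n + 1) = 0 := by simp [hb]
    simp [this]
  have hnorm : ∑ k ∈ Finset.range m, b k ^ 2 = 1 := by
    rw [← Fin.sum_univ_eq_sum_range (fun k => b k ^ 2) m]
    rw [← hξ]
    exact Finset.sum_congr rfl (fun i _ => by rw [hbfin i])
  calc ‖(star ξ) ⬝ᵥ ((jordanBlock m lam).mulVec ξ) - lam‖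
      ≤ ∑ i : Fin m, b (i : ℕ) * b ((i : ℕ) + 1) := habs
    _ = ∑ k ∈ Finset.range (m - 1), b k * b (k + 1) := hsum2
    _ ≤ Real.cos (Real.pi / (m + 1)) * ∑ k ∈ Finset.range m, b k ^ 2 :=
        jordan_aux_key m hm b
    _ = Real.cos (Real.pi / (m + 1)) := by rw [hnorm, mul_one]

end
end

section
/- For every positive integer m and every λ ∈ ℂ there exists a unit vector ξ ∈ ℂ^m such that ⟨J_m(λ)ξ, ξ⟩ = λ + i·cos(π/(m+1)). -/
open Matrix

noncomputable section

private lemma sum_sin_double (n : ℕ) :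
    ∑ k ∈ Finset.range n, Real.sin (2 * (k + 1) * (Real.pi / (n + 2)))
      = 2 * Real.sin (Real.pi / (n + 2)) * Real.cos (Real.pi / (n + 2)) := by
  set θ : ℝ := Real.pi / (n + 2) with hθ
  have hn2 : (0:ℝ) < n + 2 := by positivity
  have hθpos : 0 < θ := by positivity
  have hθlt : θ < Real.pi := by
    rw [hθ, div_lt_iff₀ hn2]
    nlinarith [Real.pi_pos]
  have hsin : Real.sin θ ≠ 0 := ne_of_gt (Real.sin_pos_of_pos_of_lt_pi hθpos hθlt)
  have hπ : (n + 2 : ℝ) * θ = Real.pi := by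
    rw [hθ]; field_simp
  have htel : ∑ k ∈ Finset.range n,
      (Real.cos ((2 * k + 1) * θ) - Real.cos ((2 * (k+1) + 1) * θ))
      = Real.cos θ - Real.cos ((2 * n + 1) * θ) := by
    have h := Finset.sum_range_sub' (fun k : ℕ => Real.cos ((2 * k + 1) * θ)) n
    push_cast at h
    rw [show (2 * (0:ℝ) + 1) * θ = θ by ring] at h
    exact h
  have hterm : ∀ k : ℕ,
      Real.cos ((2 * k + 1) * θ) - Real.cos ((2 * (k+1) + 1) * θ)
      = 2 * Real.sin θ * Real.sin (2 * (k + 1) * θ) := by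
    intro k
    rw [Real.cos_sub_cos]
    have h1 : ((2 * k + 1) * θ + (2 * (k+1) + 1) * θ) / 2 = 2 * (k + 1) * θ := by ring
    have h2 : ((2 * k + 1) * θ - (2 * (k+1) + 1) * θ) / 2 = -θ := by ring
    rw [h1, h2, Real.sin_neg]
    ring
  have hend : Real.cos ((2 * n + 1) * θ) = Real.cos (3 * θ) := by
    have : (2 * n + 1) * θ = 2 * Real.pi - 3 * θ := by
      have : (2 * (n:ℝ) + 1) * θ = 2 * ((n + 2) * θ) - 3 * θ := by ring
      rw [this, hπ]
    rw [this, Real.cos_two_pi_sub]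
  have hS : 2 * Real.sin θ * (∑ k ∈ Finset.range n, Real.sin (2 * (k + 1) * θ))
      = Real.cos θ - Real.cos (3 * θ) := by
    rw [Finset.mul_sum]
    rw [← hend]
    rw [← htel]
    apply Finset.sum_congr rfl
    intro k _
    rw [hterm k]
  have hdiff : Real.cos θ - Real.cos (3 * θ) = 2 * Real.sin θ * (2 * Real.sin θ * Real.cos θ) := by
    rw [Real.cos_sub_cos]
    have h1 : (θ + 3 * θ) / 2 = 2 * θ := by ring
    have h2 : (θ - 3 * θ) / 2 = -θ := by ring
    rw [h1, h2, Real.sin_neg, Real.sin_two_mul]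
    ring
  have := hS.trans hdiff
  exact mul_left_cancel₀ (by simpa using hsin) this

private lemma key_trig (n : ℕ) :
    ∑ k ∈ Finset.range n,
        Real.sin ((k + 1) * (Real.pi / (n + 2))) * Real.sin ((k + 2) * (Real.pi / (n + 2)))
      = Real.cos (Real.pi / (n + 2)) *
          ∑ k ∈ Finset.range (n + 1), Real.sin ((k + 1) * (Real.pi / (n + 2))) ^ 2 := by
  set θ : ℝ := Real.pi / (n + 2) with hθ
  have hπ : (n + 2 : ℝ) * θ = Real.pi := by rw [hθ]; field_simp
  have hterm : ∀ k : ℕ,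
      Real.sin ((k + 1) * θ) * Real.sin ((k + 2) * θ)
        = Real.cos θ * Real.sin ((k + 1) * θ) ^ 2 + Real.sin θ * Real.sin (2 * (k + 1) * θ) / 2 := by
    intro k
    have h1 : ((k : ℝ) + 2) * θ = (k + 1) * θ + θ := by ring
    have h2 : 2 * ((k : ℝ) + 1) * θ = 2 * (((k : ℝ) + 1) * θ) := by ring
    rw [h1, Real.sin_add, h2, Real.sin_two_mul]
    ring
  have hlast : Real.sin (((n : ℝ) + 1) * θ) = Real.sin θ := by
    have : ((n : ℝ) + 1) * θ = Real.pi - θ := by rw [← hπ]; ring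
    rw [this, Real.sin_pi_sub]
  calc ∑ k ∈ Finset.range n, Real.sin ((k + 1) * θ) * Real.sin ((k + 2) * θ)
      = ∑ k ∈ Finset.range n, (Real.cos θ * Real.sin ((k + 1) * θ) ^ 2
          + Real.sin θ * Real.sin (2 * (k + 1) * θ) / 2) := by
        exact Finset.sum_congr rfl fun k _ => hterm k
    _ = Real.cos θ * ∑ k ∈ Finset.range n, Real.sin ((k + 1) * θ) ^ 2
          + Real.sin θ / 2 * ∑ k ∈ Finset.range n, Real.sin (2 * (k + 1) * θ) := by
        rw [Finset.sum_add_distrib, Finset.mul_sum, Finset.mul_sum]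
        congr 1
        exact Finset.sum_congr rfl fun k _ => by ring
    _ = Real.cos θ * ∑ k ∈ Finset.range n, Real.sin ((k + 1) * θ) ^ 2
          + Real.cos θ * Real.sin θ ^ 2 := by
        rw [sum_sin_double n]
        ring
    _ = Real.cos θ * ∑ k ∈ Finset.range (n + 1), Real.sin ((k + 1) * θ) ^ 2 := by
        rw [Finset.sum_range_succ]
        rw [hlast]
        ring

/-- for every positive integer `m` and every `λ ∈ ℂ` there is a unit vector
`ξ ∈ ℂ^m` with `⟨J_m(λ)ξ, ξ⟩ = λ + i·cos(π/(m+1))`. -/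
theorem jordan_numericalRange_extremal_point (m : ℕ) (hm : 0 < m) (lam : ℂ) :
    ∃ ξ : Fin m → ℂ, ∑ i, ‖ξ i‖ ^ 2 = 1 ∧
      (star ξ) ⬝ᵥ ((jordanBlock m lam).mulVec ξ)
        = lam + Complex.I * Real.cos (Real.pi / (m + 1)) := by
  obtain ⟨n, rfl⟩ : ∃ n, m = n + 1 := ⟨m - 1, by omega⟩
  have key_trig := key_trig n
  set θ : ℝ := Real.pi / (n + 2) with hθ
  set s : ℕ → ℝ := fun k => Real.sin ((k + 1) * θ) with hs
  set N : ℝ := ∑ k ∈ Finset.range (n + 1), s k ^ 2 with hN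
  have hθpos : 0 < θ := by positivity
  have hNpos : 0 < N := by
    apply Finset.sum_pos _ (by simp)
    intro k hk
    have hk' : (k : ℝ) + 1 ≤ n + 1 := by
      have := Finset.mem_range.mp hk; exact_mod_cast Nat.succ_le_succ (Nat.lt_succ_iff.mp this)
    have h1 : 0 < ((k : ℝ) + 1) * θ := by positivity
    have h2 : ((k : ℝ) + 1) * θ < Real.pi := by
      have : ((k : ℝ) + 1) * θ < ((n : ℝ) + 2) * θ := by
        apply mul_lt_mul_of_pos_right _ hθpos
        linarith
      have hπ : ((n : ℝ) + 2) * θ = Real.pi := by rw [hθ]; field_simp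
      linarith [hπ ▸ this]
    exact pow_pos (Real.sin_pos_of_pos_of_lt_pi h1 h2) 2
  set r : ℕ → ℝ := fun k => s k / Real.sqrt N with hr
  set η : ℕ → ℂ := fun k => Complex.I ^ k * (r k : ℂ) with hη
  have hsq : ∀ k, r k ^ 2 = s k ^ 2 / N := by
    intro k
    rw [hr]
    rw [div_pow, Real.sq_sqrt hNpos.le]
  have hconj_self : ∀ k, (starRingEnd ℂ) (η k) * η k = ((s k ^ 2 / N : ℝ) : ℂ) := by
    intro k
    rw [hη]
    simp only [_root_.map_mul, map_pow, Complex.conj_I, Complex.conj_ofReal]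
    rw [show (-Complex.I) ^ k * (r k : ℂ) * (Complex.I ^ k * (r k : ℂ))
        = ((-Complex.I) * Complex.I) ^ k * ((r k : ℂ) * (r k : ℂ)) from by rw [mul_pow]; ring]
    rw [show (-Complex.I) * Complex.I = 1 from by simp [Complex.I_mul_I]]
    rw [← hsq k]
    push_cast
    ring
  have hconj_next : ∀ k, (starRingEnd ℂ) (η k) * η (k + 1)
      = Complex.I * ((s k * s (k + 1) / N : ℝ) : ℂ) := by
    intro k
    rw [hη]
    simp only [_root_.map_mul, map_pow, Complex.conj_I, Complex.conj_ofReal]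
    rw [show (-Complex.I) ^ k * (r k : ℂ) * (Complex.I ^ (k + 1) * (r (k + 1) : ℂ))
        = ((-Complex.I) * Complex.I) ^ k * Complex.I * ((r k : ℂ) * (r (k + 1) : ℂ)) from by
      rw [mul_pow, pow_succ]; ring]
    rw [show (-Complex.I) * Complex.I = 1 from by simp [Complex.I_mul_I]]
    have : r k * r (k + 1) = s k * s (k + 1) / N := by
      rw [hr]
      simp only
      rw [div_mul_div_comm, Real.mul_self_sqrt hNpos.le]
    push_cast [← this]
    ring
  refine ⟨fun i => η (i : ℕ), ?_, ?_⟩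
  · have hnorm : ∀ k, ‖η k‖ ^ 2 = s k ^ 2 / N := by
      intro k
      rw [hη, norm_mul, norm_pow, Complex.norm_I, one_pow, one_mul, Complex.norm_real,
        Real.norm_eq_abs, sq_abs, hsq]
    rw [Fin.sum_univ_eq_sum_range (fun k => ‖η k‖ ^ 2)]
    simp only [hnorm]
    rw [← Finset.sum_div, ← hN, div_self hNpos.ne']
  · -- the inner product computation
    have hrow : ∀ i : Fin (n + 1), ((jordanBlock (n+1) lam).mulVec fun j => η (j : ℕ)) i
        = lam * η (i : ℕ) + (if (i : ℕ) + 1 ∈ Finset.range (n + 1) then η ((i : ℕ) + 1) else 0) := by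
      intro i
      show ∑ j : Fin (n + 1), (if (i : ℕ) = (j : ℕ) then lam else
          if (i : ℕ) + 1 = (j : ℕ) then 1 else 0) * η (j : ℕ) = _
      rw [Fin.sum_univ_eq_sum_range (fun j => (if (i : ℕ) = j then lam else
          if (i : ℕ) + 1 = j then 1 else 0) * η j)]
      have hsplit : ∀ j : ℕ, (if (i : ℕ) = j then lam else
          if (i : ℕ) + 1 = j then 1 else 0) * η j
          = (if (i : ℕ) = j then lam * η j else 0)
            + (if (i : ℕ) + 1 = j then η j else 0) := by
        intro j
        split_ifs with h1 h2 h2 <;> first | omega | ring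
      simp only [hsplit]
      rw [Finset.sum_add_distrib, Finset.sum_ite_eq, Finset.sum_ite_eq]
      simp [Finset.mem_range, i.isLt]
    have hdot : (star fun j : Fin (n+1) => η (j : ℕ)) ⬝ᵥ
        ((jordanBlock (n+1) lam).mulVec fun j => η (j : ℕ))
        = ∑ i ∈ Finset.range (n + 1), (starRingEnd ℂ) (η i) *
          (lam * η i + (if i + 1 ∈ Finset.range (n + 1) then η (i + 1) else 0)) := by
      rw [dotProduct]
      rw [← Fin.sum_univ_eq_sum_range (fun i => (starRingEnd ℂ) (η i) *
          (lam * η i + (if i + 1 ∈ Finset.range (n + 1) then η (i + 1) else 0)))]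
      exact Finset.sum_congr rfl fun i _ => by rw [hrow i]; rfl
    rw [hdot]
    have hexpand : ∀ i : ℕ, (starRingEnd ℂ) (η i) *
        (lam * η i + (if i + 1 ∈ Finset.range (n + 1) then η (i + 1) else 0))
        = lam * ((starRingEnd ℂ) (η i) * η i)
          + (if i + 1 ∈ Finset.range (n + 1) then (starRingEnd ℂ) (η i) * η (i + 1) else 0) := by
      intro i
      split_ifs <;> ring
    simp only [hexpand]
    rw [Finset.sum_add_distrib, ← Finset.mul_sum]
    have h1 : ∑ i ∈ Finset.range (n + 1), (starRingEnd ℂ) (η i) * η i = 1 := by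
      simp only [hconj_self]
      rw [← Complex.ofReal_sum, ← Finset.sum_div, ← hN, div_self hNpos.ne']
      simp
    have h2 : ∑ i ∈ Finset.range (n + 1),
        (if i + 1 ∈ Finset.range (n + 1) then (starRingEnd ℂ) (η i) * η (i + 1) else 0)
        = Complex.I * Real.cos θ := by
      rw [Finset.sum_range_succ]
      rw [if_neg (by simp)]
      have : ∀ i ∈ Finset.range n,
          (if i + 1 ∈ Finset.range (n + 1) then (starRingEnd ℂ) (η i) * η (i + 1) else 0)
          = Complex.I * ((s i * s (i + 1) / N : ℝ) : ℂ) := by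
        intro i hi
        rw [if_pos (by simp [Finset.mem_range] at hi ⊢; omega), hconj_next]
      rw [Finset.sum_congr rfl this, add_zero, ← Finset.mul_sum, ← Complex.ofReal_sum,
        ← Finset.sum_div]
      have hks : ∑ k ∈ Finset.range n, s k * s (k + 1) = Real.cos θ * N := by
        rw [hN, hs]
        convert key_trig using 2 with k hk
        push_cast
        ring_nf
      rw [hks, mul_div_assoc, div_self hNpos.ne', mul_one]
    rw [h1, h2, mul_one,
      show Real.pi / (((n + 1 : ℕ) : ℝ) + 1) = θ from by rw [hθ]; push_cast; ring]

end
end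

section
/- Let m, M_1, …, M_r be positive integers with M_t ≥ m for every t, let μ_1, …, μ_r ∈ ℂ, and let a_1, …, a_r ≥ 0 with Σ_t a_t = 1; set μ = Σ_t a_t μ_t. Then there exists a unital completely positive map ψ : ⊕_{t=1}^r M_{M_t}(ℂ) → M_m(ℂ) such that ψ(⊕_{t=1}^r J_{M_t}(μ_t)) = J_m(μ). In particular J_m(μ) lies in the matricial range W_m(⊕_{t=1}^r J_{M_t}(μ_t)). -/
open scoped ComplexOrder

noncomputable section

/-- The direct sum `⊕_j M_{k_j}(ℂ)`. -/
abbrev PiMat (n : ℕ) (k : Fin n → ℕ) := ∀ j : Fin n, Matrix (Fin (k j)) (Fin (k j)) ℂ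

/-- A `p×p` matrix with entries in the direct sum `⊕_j M_{k_j}(ℂ)` is positive if for each `j`
the associated complex block matrix is positive semidefinite. -/
def PiMatPos {n : ℕ} {k : Fin n → ℕ} {p : ℕ} (X : Matrix (Fin p) (Fin p) (PiMat n k)) : Prop :=
  ∀ j : Fin n,
    (Matrix.of fun (a b : Fin p × Fin (k j)) => X a.1 b.1 j a.2 b.2).PosSemidef

/-- Positivity for a `p×p` matrix with entries in `M_m(ℂ)`. -/
def MatPos {m : ℕ} {p : ℕ} (X : Matrix (Fin p) (Fin p) (Matrix (Fin m) (Fin m) ℂ)) : Prop :=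
  (Matrix.of fun (a b : Fin p × Fin m) => X a.1 b.1 a.2 b.2).PosSemidef

/-- Unital completely positive map defined on all of `⊕_j M_{k_j}(ℂ)`, valued in `M_m(ℂ)`. -/
def IsUcpAlg {n : ℕ} {k : Fin n → ℕ} {m : ℕ}
    (φ : PiMat n k →ₗ[ℂ] Matrix (Fin m) (Fin m) ℂ) : Prop :=
  φ 1 = 1 ∧ ∀ (p : ℕ) (X : Matrix (Fin p) (Fin p) (PiMat n k)),
    PiMatPos X → MatPos (Matrix.of fun r s => φ (X r s))

/-- The operator system `S_T = span{1, T, T*}`. -/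
def opSys {n : ℕ} {k : Fin n → ℕ} (T : PiMat n k) : Submodule ℂ (PiMat n k) :=
  Submodule.span ℂ {1, T, star T}

lemma one_mem_opSys {n : ℕ} {k : Fin n → ℕ} (T : PiMat n k) : (1 : PiMat n k) ∈ opSys T :=
  Submodule.subset_span (Set.mem_insert _ _)

lemma self_mem_opSys {n : ℕ} {k : Fin n → ℕ} (T : PiMat n k) : T ∈ opSys T :=
  Submodule.subset_span (Set.mem_insert_of_mem _ (Set.mem_insert _ _))

lemma star_mem_opSys {n : ℕ} {k : Fin n → ℕ} (T : PiMat n k) : star T ∈ opSys T :=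
  Submodule.subset_span (Set.mem_insert_of_mem _ (Set.mem_insert_of_mem _ rfl))

/-- Unital completely positive map defined on the operator system `S_T`, valued in `M_m(ℂ)`. -/
def IsUcpSub {n : ℕ} {k : Fin n → ℕ} {m : ℕ} (T : PiMat n k)
    (φ : opSys T →ₗ[ℂ] Matrix (Fin m) (Fin m) ℂ) : Prop :=
  φ ⟨1, one_mem_opSys T⟩ = 1 ∧ ∀ (p : ℕ) (X : Matrix (Fin p) (Fin p) (opSys T)),
    PiMatPos (Matrix.of fun r s => (X r s : PiMat n k)) →
      MatPos (Matrix.of fun r s => φ (X r s))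

/-- The matricial range `W_m(T)`. -/
def matricialRange {n : ℕ} {k : Fin n → ℕ} (T : PiMat n k) (m : ℕ) :
    Set (Matrix (Fin m) (Fin m) ℂ) :=
  {A | ∃ φ : opSys T →ₗ[ℂ] Matrix (Fin m) (Fin m) ℂ,
        IsUcpSub T φ ∧ φ ⟨T, self_mem_opSys T⟩ = A}

/-- The compression `π_ℓ` onto the `ℓ`-th summand is a boundary representation for `S_T`
if it is the unique ucp map `⊕_j M_{k_j}(ℂ) → M_{k_ℓ}(ℂ)` extending the restriction of `π_ℓ`
to `S_T`. -/
def IsBoundaryRep {n : ℕ} {k : Fin n → ℕ} (T : PiMat n k) (ℓ : Fin n) : Prop :=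
  ∀ φ : PiMat n k →ₗ[ℂ] Matrix (Fin (k ℓ)) (Fin (k ℓ)) ℂ,
    IsUcpAlg φ → (∀ x ∈ opSys T, φ x = x ℓ) → φ = LinearMap.proj ℓ

end

noncomputable section


namespace JordanAux

open Matrix

lemma posSemidef_smul {ι : Type*} [Fintype ι] {A : Matrix ι ι ℂ} (hA : A.PosSemidef)
    {c : ℝ} (hc : 0 ≤ c) : ((c : ℂ) • A).PosSemidef := by
  constructor
  · unfold Matrix.IsHermitian
    rw [conjTranspose_smul, hA.1.eq, Complex.star_def, Complex.conj_ofReal]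
  · intro x
    exact (Matrix.PosSemidef.smul hA (a := (c : ℂ)) (by exact_mod_cast hc)).2 x

lemma posSemidef_sum {ι κ : Type*} [Fintype ι] [DecidableEq ι] (s : Finset κ)
    (f : κ → Matrix ι ι ℂ) (h : ∀ t ∈ s, (f t).PosSemidef) :
    (∑ t ∈ s, f t).PosSemidef := by
  classical
  induction s using Finset.induction with
  | empty => simpa using Matrix.PosSemidef.zero
  | insert _ _ hnot ih =>
    rw [Finset.sum_insert hnot]
    exact (h _ (Finset.mem_insert_self _ _)).add
      (ih fun t ht => h t (Finset.mem_insert_of_mem ht))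

/-- Compression onto the top-left corner, as a linear map. -/
def compMap {m M : ℕ} (h : m ≤ M) :
    Matrix (Fin M) (Fin M) ℂ →ₗ[ℂ] Matrix (Fin m) (Fin m) ℂ where
  toFun A := A.submatrix (Fin.castLE h) (Fin.castLE h)
  map_add' _ _ := rfl
  map_smul' _ _ := rfl

end JordanAux

/-- given sizes `M_t ≥ m`, points `μ_t ∈ ℂ` and convex coefficients `a_t`,
with `μ = Σ_t a_t μ_t`, there is a ucp map `ψ : ⊕_t M_{M_t}(ℂ) → M_m(ℂ)` carrying
`⊕_t J_{M_t}(μ_t)` to `J_m(μ)`; in particular `J_m(μ) ∈ W_m(⊕_t J_{M_t}(μ_t))`. -/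
theorem jordan_convexCombination_in_matricialRange (m r : ℕ) (hm : 0 < m) (hr : 0 < r)
    (M : Fin r → ℕ) (hM : ∀ t, m ≤ M t) (μ : Fin r → ℂ)
    (a : Fin r → ℝ) (ha : ∀ t, 0 ≤ a t) (hsum : ∑ t, a t = 1) :
    (∃ ψ : PiMat r M →ₗ[ℂ] Matrix (Fin m) (Fin m) ℂ,
        IsUcpAlg ψ ∧
          ψ (fun t => jordanBlock (M t) (μ t)) = jordanBlock m (∑ t, (a t : ℂ) * μ t)) ∧
      jordanBlock m (∑ t, (a t : ℂ) * μ t)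
        ∈ matricialRange (fun t => jordanBlock (M t) (μ t)) m := by
  classical
  have hsumC : ∑ t, (a t : ℂ) = 1 := by
    rw [← Complex.ofReal_sum, hsum, Complex.ofReal_one]
  set T : PiMat r M := fun t => jordanBlock (M t) (μ t) with hT
  set ψ : PiMat r M →ₗ[ℂ] Matrix (Fin m) (Fin m) ℂ :=
    ∑ t, (a t : ℂ) • ((JordanAux.compMap (hM t)).comp (LinearMap.proj t)) with hψ
  have ψapp : ∀ X : PiMat r M, ψ X =
      ∑ t, (a t : ℂ) • (X t).submatrix (Fin.castLE (hM t)) (Fin.castLE (hM t)) := by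
    intro X
    simp [hψ, JordanAux.compMap, LinearMap.sum_apply, LinearMap.coe_mk, AddHom.coe_mk]
    rfl
  have hunit : ψ 1 = 1 := by
    rw [ψapp]
    have : ∀ t : Fin r,
        ((1 : PiMat r M) t).submatrix (Fin.castLE (hM t)) (Fin.castLE (hM t))
          = (1 : Matrix (Fin m) (Fin m) ℂ) := fun t =>
      Matrix.submatrix_one _ (Fin.castLE_injective (hM t))
    simp_rw [this, ← Finset.sum_smul, hsumC, one_smul]
  have hcompJ : ∀ t, (T t).submatrix (Fin.castLE (hM t)) (Fin.castLE (hM t))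
      = jordanBlock m (μ t) := by
    intro t
    ext i j
    simp [hT, jordanBlock, Matrix.submatrix_apply]
  have hψT : ψ T = jordanBlock m (∑ t, (a t : ℂ) * μ t) := by
    rw [ψapp]
    simp_rw [hcompJ]
    ext i j
    by_cases h1 : (i : ℕ) = (j : ℕ)
    · simp [jordanBlock, Matrix.sum_apply, h1]
    · by_cases h2 : (i : ℕ) + 1 = (j : ℕ)
      · simp [jordanBlock, Matrix.sum_apply, h1, h2, hsumC]
      · simp [jordanBlock, Matrix.sum_apply, h1, h2]
  have hcp : ∀ (p : ℕ) (X : Matrix (Fin p) (Fin p) (PiMat r M)),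
      PiMatPos X → MatPos (Matrix.of fun s u => ψ (X s u)) := by
    intro p X hX
    unfold MatPos
    have heq : (Matrix.of fun (c d : Fin p × Fin m) =>
        (Matrix.of fun s u => ψ (X s u)) c.1 d.1 c.2 d.2) =
        ∑ t, (a t : ℂ) •
          ((Matrix.of fun (c d : Fin p × Fin (M t)) => X c.1 d.1 t c.2 d.2).submatrix
            (fun q => (q.1, Fin.castLE (hM t) q.2)) (fun q => (q.1, Fin.castLE (hM t) q.2))) := by
      ext ⟨s, i⟩ ⟨u, j⟩
      simp [ψapp, Matrix.sum_apply, Matrix.submatrix_apply]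
    rw [heq]
    refine JordanAux.posSemidef_sum _ _ fun t _ => JordanAux.posSemidef_smul ((hX t).submatrix _) (ha t)
  have hUcp : IsUcpAlg ψ := ⟨hunit, hcp⟩
  refine ⟨⟨ψ, hUcp, hψT⟩, ?_⟩
  refine ⟨ψ.comp (opSys T).subtype, ⟨?_, ?_⟩, ?_⟩
  · simpa using hunit
  · intro p X hpos
    have := hcp p (Matrix.of fun s u => (X s u : PiMat r M)) hpos
    simpa using this
  · simpa using hψT

end
end

section
/- Let J = ⊕_{j=1}^n J_{m_j}(λ_j) ∈ B = ⊕_{j=1}^n M_{m_j}(ℂ), where λ_1, …, λ_n ∈ ℂ are distinct. Fix k ∈ {1, …, n} and suppose that λ_k is not an extreme point of the convex hull of {λ_1, …, λ_n}, and that m_s ≥ m_k for every index s such that λ_s is an extreme point of that convex hull. Then the compression π_k is not a boundary representation for S_J. -/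
open scoped ComplexOrder

noncomputable section


namespace NotBdryAux

open scoped ComplexOrder





lemma psd_add {d : Type*} [Fintype d] {A B : Matrix d d ℂ}
    (hA : A.PosSemidef) (hB : B.PosSemidef) : (A + B).PosSemidef := by
  refine Matrix.PosSemidef.of_dotProduct_mulVec_nonneg (hA.1.add hB.1) fun x => ?_
  rw [Matrix.add_mulVec, dotProduct_add]
  exact add_nonneg (hA.dotProduct_mulVec_nonneg x) (hB.dotProduct_mulVec_nonneg x)

lemma psd_real_smul {d : Type*} [Fintype d] {A : Matrix d d ℂ}
    (hA : A.PosSemidef) {c : ℝ} (hc : 0 ≤ c) : ((c : ℂ) • A).PosSemidef := by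
  refine Matrix.PosSemidef.of_dotProduct_mulVec_nonneg ?_ fun x => ?_
  · unfold Matrix.IsHermitian
    rw [Matrix.conjTranspose_smul, hA.1, Complex.star_def, Complex.conj_ofReal]
  · rw [Matrix.smul_mulVec, dotProduct_smul, smul_eq_mul]
    exact mul_nonneg (Complex.zero_le_real.mpr hc) (hA.dotProduct_mulVec_nonneg x)

lemma psd_sum {d : Type*} [Fintype d] {ι : Type*} (S : Finset ι)
    (f : ι → Matrix d d ℂ) (h : ∀ s ∈ S, (f s).PosSemidef) :
    (∑ s ∈ S, f s).PosSemidef :=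
  Finset.sum_induction f _ (fun _ _ ha hb => psd_add ha hb) Matrix.PosSemidef.zero h





lemma exists_weights {n : ℕ} (lam : Fin n → ℂ) (hdist : Function.Injective lam) (k : Fin n)
    (hk : lam k ∉ Set.extremePoints ℝ (convexHull ℝ (Set.range lam))) :
    ∃ t : Fin n → ℝ, (∀ s, 0 ≤ t s) ∧ (∑ s, t s = 1) ∧ (∑ s, t s • lam s = lam k) ∧
      (∀ s, t s ≠ 0 → lam s ∈ Set.extremePoints ℝ (convexHull ℝ (Set.range lam))) := by
  classical
  set C := convexHull ℝ (Set.range lam) with hC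
  set E := C.extremePoints ℝ with hEdef
  have hEsub : E ⊆ Set.range lam := extremePoints_convexHull_subset
  have hEfin : E.Finite := (Set.finite_range lam).subset hEsub
  have hcomp : IsCompact C := (Set.finite_range lam).isCompact_convexHull ℝ
  have hKM : closure (convexHull ℝ E) = C :=
    closure_convexHull_extremePoints hcomp (convex_convexHull ℝ _)
  rw [(hEfin.isClosed_convexHull ℝ).closure_eq] at hKM
  have hkC : lam k ∈ C := subset_convexHull ℝ _ ⟨k, rfl⟩
  rw [← hKM] at hkC
  -- pass to a finset of indices
  set F : Finset (Fin n) := Finset.univ.filter (fun s => lam s ∈ E) with hF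
  have hsub : convexHull ℝ E ⊆ convexHull ℝ (↑(F.image lam) : Set ℂ) := by
    apply convexHull_mono
    intro y hy
    obtain ⟨s, rfl⟩ := hEsub hy
    exact Finset.mem_coe.mpr (Finset.mem_image.mpr
      ⟨s, Finset.mem_filter.mpr ⟨Finset.mem_univ s, hy⟩, rfl⟩)
  obtain ⟨w, hw0, hw1, hwc⟩ := Finset.mem_convexHull'.mp (hsub hkC)
  refine ⟨fun s => if lam s ∈ E then w (lam s) else 0, ?_, ?_, ?_, ?_⟩
  · intro s
    by_cases h : lam s ∈ E
    · simpa [h] using hw0 (lam s) (Finset.mem_image.mpr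
        ⟨s, Finset.mem_filter.mpr ⟨Finset.mem_univ s, h⟩, rfl⟩)
    · simp [h]
  · rw [← hw1, Finset.sum_image (fun a _ b _ h => hdist h)]
    simp [hF, Finset.sum_filter]
  · rw [← hwc, Finset.sum_image (fun a _ b _ h => hdist h)]
    simp [hF, Finset.sum_filter, ite_smul]
  · intro s hs
    by_contra h
    simp [h] at hs



variable {n : ℕ}

def emb (m : Fin n → ℕ) (hm : ∀ j, 0 < m j) (k s : Fin n) (i : Fin (m k)) : Fin (m s) :=
  if h : (i : ℕ) < m s then ⟨i, h⟩ else ⟨0, hm s⟩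

lemma emb_val {m : Fin n → ℕ} (hm : ∀ j, 0 < m j) {k s : Fin n} (h : m k ≤ m s)
    (i : Fin (m k)) : ((emb m hm k s i : ℕ)) = (i : ℕ) := by
  unfold emb; rw [dif_pos (lt_of_lt_of_le i.2 h)]

def phi (m : Fin n → ℕ) (hm : ∀ j, 0 < m j) (k : Fin n) (t : Fin n → ℝ) :
    PiMat n m →ₗ[ℂ] Matrix (Fin (m k)) (Fin (m k)) ℂ where
  toFun x := Matrix.of fun i j => ∑ s, (t s : ℂ) * x s (emb m hm k s i) (emb m hm k s j)
  map_add' x y := by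
    ext i j
    simp only [Matrix.of_apply, Pi.add_apply, Matrix.add_apply, mul_add]
    rw [Finset.sum_add_distrib]
  map_smul' c x := by
    ext i j
    simp only [Matrix.of_apply, Pi.smul_apply, Matrix.smul_apply, smul_eq_mul,
      RingHom.id_apply, Finset.mul_sum]
    exact Finset.sum_congr rfl fun s _ => by ring

lemma phi_apply (m : Fin n → ℕ) (hm : ∀ j, 0 < m j) (k : Fin n) (t : Fin n → ℝ)
    (x : PiMat n m) (i j : Fin (m k)) :
    phi m hm k t x i j = ∑ s, (t s : ℂ) * x s (emb m hm k s i) (emb m hm k s j) := rfl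

end NotBdryAux

/-- if `λ_k` is not an extreme point of the convex hull of the (distinct)
eigenvalues `λ_1, …, λ_n`, and every block whose eigenvalue is an extreme point of that
convex hull has size at least `m_k`, then the compression `π_k` is not a boundary
representation for `S_J`, where `J = ⊕_j J_{m_j}(λ_j)`. -/

theorem not_boundaryRep_of_not_extremePoint (n : ℕ) (m : Fin n → ℕ) (hm : ∀ j, 0 < m j)
    (lam : Fin n → ℂ) (hdist : Function.Injective lam) (k : Fin n)
    (hk : lam k ∉ Set.extremePoints ℝ (convexHull ℝ (Set.range lam)))
    (hsize : ∀ s : Fin n,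
      lam s ∈ Set.extremePoints ℝ (convexHull ℝ (Set.range lam)) → m k ≤ m s) :
    ¬ IsBoundaryRep (fun j => jordanBlock (m j) (lam j)) k := by
  classical
  intro hbd
  obtain ⟨t, ht0, ht1, htlam, htE⟩ := NotBdryAux.exists_weights lam hdist k hk
  set J : PiMat n m := fun j => jordanBlock (m j) (lam j) with hJ
  have hts : ∀ s, t s ≠ 0 → m k ≤ m s := fun s hs => hsize s (htE s hs)
  have htk : t k = 0 := by
    by_contra h; exact hk (htE k h)
  set φ := NotBdryAux.phi m hm k t with hφ
  have htsum : (∑ s, (t s : ℂ)) = 1 := by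
    rw [← Complex.ofReal_sum, ht1, Complex.ofReal_one]
  -- φ(1) = 1
  have hφ1 : φ 1 = 1 := by
    ext i j
    rw [hφ, NotBdryAux.phi_apply]
    have key : ∀ s : Fin n, (t s : ℂ) *
        (1 : PiMat n m) s (NotBdryAux.emb m hm k s i) (NotBdryAux.emb m hm k s j)
        = (t s : ℂ) * (if i = j then 1 else 0) := by
      intro s
      by_cases hs : t s = 0
      · simp [hs]
      · have h := hts s hs
        have hiff : NotBdryAux.emb m hm k s i = NotBdryAux.emb m hm k s j ↔ i = j := by
          rw [Fin.ext_iff, NotBdryAux.emb_val hm h, NotBdryAux.emb_val hm h, ← Fin.ext_iff]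
        simp only [Pi.one_apply, Matrix.one_apply, hiff]
    rw [Finset.sum_congr rfl fun s _ => key s, ← Finset.sum_mul, htsum, one_mul,
      Matrix.one_apply]
  -- φ(J) = J k
  have hφJ : φ J = jordanBlock (m k) (lam k) := by
    ext i j
    rw [hφ, NotBdryAux.phi_apply]
    have key : ∀ s : Fin n, (t s : ℂ) *
        J s (NotBdryAux.emb m hm k s i) (NotBdryAux.emb m hm k s j)
        = (t s : ℂ) * (if (i : ℕ) = (j : ℕ) then lam s
            else if (i : ℕ) + 1 = (j : ℕ) then 1 else 0) := by
      intro s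
      by_cases hs : t s = 0
      · simp [hs]
      · have h := hts s hs
        rw [hJ]
        simp only [jordanBlock, Matrix.of_apply, NotBdryAux.emb_val hm h]
    rw [Finset.sum_congr rfl fun s _ => key s]
    simp only [jordanBlock, Matrix.of_apply]
    by_cases hc : (i : ℕ) = (j : ℕ)
    · simp only [if_pos hc]
      rw [← htlam]
      exact Finset.sum_congr rfl fun s _ => (Complex.real_smul).symm
    · by_cases hc' : (i : ℕ) + 1 = (j : ℕ)
      · simp only [if_neg hc, if_pos hc', mul_one]
        rw [← Complex.ofReal_sum, ht1, Complex.ofReal_one]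
      · simp [if_neg hc, if_neg hc']
  -- φ commutes with star
  have hφstar : ∀ x : PiMat n m, φ (star x) = star (φ x) := by
    intro x
    ext i j
    rw [hφ, NotBdryAux.phi_apply, Matrix.star_apply, NotBdryAux.phi_apply]
    rw [star_sum]
    refine Finset.sum_congr rfl fun s _ => ?_
    rw [star_mul', Complex.star_def, Complex.conj_ofReal]
    rfl
  -- φ agrees with π_k on the operator system
  have hagree : ∀ x ∈ opSys J, φ x = x k := by
    intro x hx
    refine Submodule.span_induction (p := fun x _ => φ x = x k) ?_ ?_ ?_ ?_ hx
    · intro y hy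
      simp only [Set.mem_insert_iff, Set.mem_singleton_iff] at hy
      rcases hy with rfl | rfl | rfl
      · rw [hφ1]; rfl
      · rw [hφJ]
      · rw [hφstar, hφJ]
        show star (jordanBlock (m k) (lam k)) = star (J k)
        rw [hJ]
    · simp
    · intro a b _ _ ha hb
      rw [map_add, ha, hb]; rfl
    · intro c a _ ha
      rw [map_smul, ha]; rfl
  -- φ is ucp
  have hucp : IsUcpAlg φ := by
    refine ⟨hφ1, fun p X hX => ?_⟩
    unfold MatPos
    have hrep : (Matrix.of fun (a b : Fin p × Fin (m k)) =>
          (Matrix.of fun r s => φ (X r s)) a.1 b.1 a.2 b.2)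
        = ∑ s : Fin n, (t s : ℂ) •
            ((Matrix.of fun (a b : Fin p × Fin (m s)) => X a.1 b.1 s a.2 b.2).submatrix
              (fun a => (a.1, NotBdryAux.emb m hm k s a.2))
              (fun a => (a.1, NotBdryAux.emb m hm k s a.2))) := by
      ext a b
      simp only [Matrix.of_apply, Matrix.sum_apply, Matrix.smul_apply,
        Matrix.submatrix_apply, smul_eq_mul]
      rw [hφ, NotBdryAux.phi_apply]
    rw [hrep]
    exact NotBdryAux.psd_sum Finset.univ _ fun s _ =>
      NotBdryAux.psd_real_smul ((hX s).submatrix _) (ht0 s)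
  -- conclude
  have heq := hbd φ hucp hagree
  set x₀ : PiMat n m := Pi.single k 1 with hx₀
  have h0 : φ x₀ = 0 := by
    ext i j
    rw [hφ, NotBdryAux.phi_apply]
    rw [Matrix.zero_apply]
    apply Finset.sum_eq_zero
    intro s _
    by_cases hsk : s = k
    · subst hsk; rw [htk]; simp
    · rw [hx₀, Pi.single_eq_of_ne hsk]; simp
  have h1 : φ x₀ = 1 := by
    rw [heq]
    show x₀ k = 1
    rw [hx₀, Pi.single_eq_same]
  rw [h0] at h1
  have h00 : (0 : Matrix (Fin (m k)) (Fin (m k)) ℂ) ⟨0, hm k⟩ ⟨0, hm k⟩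
      = (1 : Matrix (Fin (m k)) (Fin (m k)) ℂ) ⟨0, hm k⟩ ⟨0, hm k⟩ := by rw [h1]
  rw [Matrix.zero_apply, Matrix.one_apply_eq] at h00
  exact zero_ne_one h00


end
end

section
/- Let N ≥ 1 and let m_1, …, m_N be positive integers with m_1 ≥ 2 and m_k ≤ m_1 for all k. Let J = ⊕_{k=1}^N J_{m_k}(0) ∈ B = ⊕_{k=1}^N M_{m_k}(ℂ). Then the unital linear map q : span{1, J, J*} → span{I_{m_1}, J_{m_1}(0), J_{m_1}(0)*} ⊆ M_{m_1}(ℂ) determined by q(α·1 + β·J + γ·J*) = α·I_{m_1} + β·J_{m_1}(0) + γ·J_{m_1}(0)* is a well-defined complete order isomorphism, i.e., q is a bijection and both q and q^{-1} are ucp. -/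
open scoped ComplexOrder

noncomputable section

/-- The operator system `span{1, A, A*}` inside a single matrix algebra. -/
def matOpSys {m : ℕ} (A : Matrix (Fin m) (Fin m) ℂ) :
    Submodule ℂ (Matrix (Fin m) (Fin m) ℂ) :=
  Submodule.span ℂ {1, A, star A}

lemma one_mem_matOpSys {m : ℕ} (A : Matrix (Fin m) (Fin m) ℂ) : (1 : _) ∈ matOpSys A :=
  Submodule.subset_span (Set.mem_insert _ _)

lemma self_mem_matOpSys {m : ℕ} (A : Matrix (Fin m) (Fin m) ℂ) : A ∈ matOpSys A :=
  Submodule.subset_span (Set.mem_insert_of_mem _ (Set.mem_insert _ _))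

lemma star_mem_matOpSys {m : ℕ} (A : Matrix (Fin m) (Fin m) ℂ) : star A ∈ matOpSys A :=
  Submodule.subset_span (Set.mem_insert_of_mem _ (Set.mem_insert_of_mem _ rfl))

/-- The nilpotent Jordan operator `J = ⊕_{k} J_{m_k}(0)`. -/
def jordanSum (N : ℕ) (m : Fin (N + 1) → ℕ) : PiMat (N + 1) m := fun k => jordanBlock (m k) 0

/-- Compression onto top-left corners. -/
def compr (N : ℕ) (m : Fin (N + 1) → ℕ) (hle : ∀ k, m k ≤ m 0) :
    Matrix (Fin (m 0)) (Fin (m 0)) ℂ →ₗ[ℂ] PiMat (N + 1) m where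
  toFun A := fun k => A.submatrix (Fin.castLE (hle k)) (Fin.castLE (hle k))
  map_add' A B := by
    funext k i j
    simp [Matrix.submatrix_apply]
  map_smul' c A := by
    funext k i j
    simp [Matrix.submatrix_apply]

lemma compr_one (N : ℕ) (m : Fin (N + 1) → ℕ) (hle : ∀ k, m k ≤ m 0) :
    compr N m hle 1 = 1 := by
  funext k
  ext i j
  simp only [compr, LinearMap.coe_mk, AddHom.coe_mk, Pi.one_apply, Matrix.submatrix_apply,
    Matrix.one_apply]
  have : Fin.castLE (hle k) i = Fin.castLE (hle k) j ↔ i = j := by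
    constructor
    · intro h
      exact Fin.ext (by simpa [Fin.ext_iff] using h)
    · rintro rfl; rfl
  simp [this]

lemma compr_jordan (N : ℕ) (m : Fin (N + 1) → ℕ) (hle : ∀ k, m k ≤ m 0) :
    compr N m hle (jordanBlock (m 0) 0) = jordanSum N m := by
  funext k
  ext i j
  simp [compr, jordanBlock, jordanSum, Matrix.submatrix_apply]

lemma compr_star (N : ℕ) (m : Fin (N + 1) → ℕ) (hle : ∀ k, m k ≤ m 0)
    (A : Matrix (Fin (m 0)) (Fin (m 0)) ℂ) :
    compr N m hle (star A) = star (compr N m hle A) := rfl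

/-- if `m_1 ≥ 2` and `m_k ≤ m_1` for all `k`, the unital linear map `q` on
`span{1, J, J*}` (for `J = ⊕_k J_{m_k}(0)`) determined by
`q(α·1 + β·J + γ·J*) = α·I_{m_1} + β·J_{m_1}(0) + γ·J_{m_1}(0)*` is a well-defined complete
order isomorphism onto `span{1, J_{m_1}(0), J_{m_1}(0)*} ⊆ M_{m_1}(ℂ)`: it is completely
positive, unital, bijective onto that operator system, and has a ucp inverse. -/
theorem jordanSum_completeOrderIso (N : ℕ) (m : Fin (N + 1) → ℕ)
    (hm : ∀ k, 0 < m k) (h0 : 2 ≤ m 0) (hle : ∀ k, m k ≤ m 0) :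
    ∃ q : opSys (jordanSum N m) →ₗ[ℂ] Matrix (Fin (m 0)) (Fin (m 0)) ℂ,
      q ⟨1, one_mem_opSys _⟩ = 1 ∧
      q ⟨jordanSum N m, self_mem_opSys _⟩ = jordanBlock (m 0) 0 ∧
      q ⟨star (jordanSum N m), star_mem_opSys _⟩ = star (jordanBlock (m 0) 0) ∧
      (∀ (p : ℕ) (X : Matrix (Fin p) (Fin p) (opSys (jordanSum N m))),
        PiMatPos (Matrix.of fun r s => (X r s : PiMat (N + 1) m)) →
          MatPos (Matrix.of fun r s => q (X r s))) ∧
      ∃ q' : matOpSys (jordanBlock (m 0) 0) →ₗ[ℂ] PiMat (N + 1) m,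
        q' ⟨1, one_mem_matOpSys _⟩ = 1 ∧
        (∀ (p : ℕ) (X : Matrix (Fin p) (Fin p) (matOpSys (jordanBlock (m 0) 0))),
          MatPos (Matrix.of fun r s => (X r s : Matrix (Fin (m 0)) (Fin (m 0)) ℂ)) →
            PiMatPos (Matrix.of fun r s => q' (X r s))) ∧
        (∀ x : opSys (jordanSum N m),
          ∃ h : q x ∈ matOpSys (jordanBlock (m 0) 0), q' ⟨q x, h⟩ = x) ∧
        (∀ y : matOpSys (jordanBlock (m 0) 0),
          ∃ h : q' y ∈ opSys (jordanSum N m), q ⟨q' y, h⟩ = y) := by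
  classical
  set J := jordanSum N m with hJ
  set B := jordanBlock (m 0) 0 with hB
  let pr : PiMat (N + 1) m →ₗ[ℂ] Matrix (Fin (m 0)) (Fin (m 0)) ℂ := LinearMap.proj 0
  let c := compr N m hle
  let q : opSys J →ₗ[ℂ] Matrix (Fin (m 0)) (Fin (m 0)) ℂ := pr.comp (opSys J).subtype
  let q' : matOpSys B →ₗ[ℂ] PiMat (N + 1) m := c.comp (matOpSys B).subtype
  have hcB : c B = J := compr_jordan N m hle
  have hc1 : c 1 = 1 := compr_one N m hle
  have hcstar : c (star B) = star J := by rw [compr_star, hcB]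
  -- membership of images
  have hq_mem : ∀ x ∈ opSys J, x 0 ∈ matOpSys B := by
    intro x hx
    have hle' : opSys J ≤ Submodule.comap pr (matOpSys B) := by
      rw [opSys, Submodule.span_le]
      rintro y (rfl | rfl | rfl)
      · exact one_mem_matOpSys B
      · exact self_mem_matOpSys B
      · exact star_mem_matOpSys B
    exact hle' hx
  have hq'_mem : ∀ A ∈ matOpSys B, c A ∈ opSys J := by
    intro A hA
    have hle' : matOpSys B ≤ Submodule.comap c (opSys J) := by
      rw [matOpSys, Submodule.span_le]
      rintro y (rfl | rfl | rfl)
      · show c 1 ∈ opSys J; rw [hc1]; exact one_mem_opSys J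
      · show c B ∈ opSys J; rw [hcB]; exact self_mem_opSys J
      · show c (star B) ∈ opSys J; rw [hcstar]; exact star_mem_opSys J
    exact hle' hA
  -- round trips
  have hqp : ∀ x ∈ opSys J, c (x 0) = x := by
    intro x hx
    have hle' : opSys J ≤ LinearMap.eqLocus (c.comp pr) LinearMap.id := by
      rw [opSys, Submodule.span_le]
      rintro y (rfl | rfl | rfl)
      · show c ((1 : PiMat (N + 1) m) 0) = 1; exact hc1
      · show c (J 0) = J; exact hcB
      · show c (star J 0) = star J; exact hcstar
    exact hle' hx
  have hpq : ∀ A ∈ matOpSys B, c A 0 = A := by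
    intro A hA
    have hle' : matOpSys B ≤ LinearMap.eqLocus (pr.comp c) LinearMap.id := by
      rw [matOpSys, Submodule.span_le]
      rintro y (rfl | rfl | rfl)
      · show c 1 0 = 1; rw [hc1]; rfl
      · show c B 0 = B; rw [hcB]; rfl
      · show c (star B) 0 = star B; rw [hcstar]; rfl
    exact hle' hA
  refine ⟨q, rfl, rfl, rfl, ?_, q', hc1, ?_, ?_, ?_⟩
  · intro p X hX
    exact hX 0
  · intro p X hX j
    exact hX.submatrix (Prod.map id (Fin.castLE (hle j)))
  · intro x
    exact ⟨hq_mem x.1 x.2, hqp x.1 x.2⟩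
  · intro y
    exact ⟨hq'_mem y.1 y.2, hpq y.1 y.2⟩

end
end
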